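/- Define f : ℝ → ℝ by f(x) := min{0, h(x)} − g(x) + |x|, where g(x) := ∫₀ˣ 2u·sin(1/u) du (integrand understood as 0 at u = 0) and h(x) := x²·sin(1/x) for x ≠ 0, h(0) := 0. Then the conclusion of the convergence lemma fails at x* = 0: for every r > 0 there exists ε ∈ (0, r) such that for every δ > 0 there exists a δ-stationary point x₀ of f with ε ≤ x₀ < r. -/

import Mathlib

open Filter Metric Set Real

noncomputable section

/-- Left derivative `f′₋(x) = d`: `(f y - f x)/(y - x) → d` as `y ↑ x`. -/
def HasLeftDeriv (f : ℝ → ℝ) (x d : ℝ) : Prop :=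
  Filter.Tendsto (fun y : ℝ => (f y - f x) / (y - x)) (nhdsWithin x (Set.Iio x)) (nhds d)

/-- Right derivative `f′₊(x) = d`: `(f y - f x)/(y - x) → d` as `y ↓ x`. -/
def HasRightDeriv (f : ℝ → ℝ) (x d : ℝ) : Prop :=
  Filter.Tendsto (fun y : ℝ => (f y - f x) / (y - x)) (nhdsWithin x (Set.Ioi x)) (nhds d)

/-- `x` is a `δ`-stationary point of `f : ℝ → ℝ`: `f′₋(x) ≤ δ` and `f′₊(x) ≥ -δ`. -/
def IsDeltaStationaryPt1 (f : ℝ → ℝ) (δ x : ℝ) : Prop :=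
  ∃ dm dp : ℝ, HasLeftDeriv f x dm ∧ HasRightDeriv f x dp ∧ dm ≤ δ ∧ -δ ≤ dp

/-- `x` is a stationary point of `f : ℝ → ℝ`: `f′₋(x) ≤ 0` and `f′₊(x) ≥ 0`. -/
def IsStationaryPt1 (f : ℝ → ℝ) (x : ℝ) : Prop :=
  IsDeltaStationaryPt1 f 0 x

/-- `g(x) = ∫₀ˣ 2u sin(1/u) du`, with the integrand extended by `0` at `u = 0`. -/
def gEx (x : ℝ) : ℝ := ∫ u in (0 : ℝ)..x, if u = 0 then 0 else 2 * u * Real.sin (1 / u)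

/-- `h(x) = x² sin(1/x)` for `x ≠ 0`, `h(0) = 0`. -/
def hEx (x : ℝ) : ℝ := if x = 0 then 0 else x ^ 2 * Real.sin (1 / x)

/-- `f(x) = min {0, h(x)} - g(x) + |x|`. -/
def fEx (x : ℝ) : ℝ := min 0 (hEx x) - gEx x + |x|

noncomputable def phi (u : ℝ) : ℝ := if u = 0 then 0 else 2 * u * Real.sin (1 / u)

lemma phi_cont : Continuous phi := by
  rw [continuous_iff_continuousAt]
  intro a
  rcases eq_or_ne a 0 with rfl | ha
  · have hb : ∀ u : ℝ, ‖phi u‖ ≤ 2 * |u| := by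
      intro u
      simp only [phi, Real.norm_eq_abs]
      split_ifs with h
      · simp
      · rw [abs_mul, abs_mul, abs_two]
        nlinarith [abs_sin_le_one (1/u), abs_nonneg u, abs_nonneg (Real.sin (1/u))]
    have hg : Filter.Tendsto (fun u : ℝ => 2 * |u|) (nhds 0) (nhds 0) := by
      have : Continuous (fun u : ℝ => 2 * |u|) := continuous_const.mul continuous_abs
      simpa using this.tendsto 0
    have h0 : ContinuousAt phi 0 := by
      unfold ContinuousAt
      simp only [phi, if_pos rfl]
      exact squeeze_zero_norm hb hg
    exact h0
  · have : ContinuousAt (fun u : ℝ => 2 * u * Real.sin (1 / u)) a := by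
      exact (continuousAt_const.mul continuousAt_id).mul
        ((Real.continuous_sin.continuousAt).comp (continuousAt_const.div continuousAt_id ha))
    refine this.congr ?_
    filter_upwards [isOpen_ne.mem_nhds ha] with u hu
    simp [phi, hu]


lemma gEx_hasDeriv (x : ℝ) (hx : x ≠ 0) : HasDerivAt gEx (2 * x * Real.sin (1 / x)) x := by
  have h := intervalIntegral.integral_hasDerivAt_right
    (phi_cont.intervalIntegrable 0 x)
    phi_cont.stronglyMeasurable.stronglyMeasurableAtFilter
    phi_cont.continuousAt
  have : phi x = 2 * x * Real.sin (1 / x) := by simp [phi, hx]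
  rw [this] at h
  exact h

lemma hEx_hasDeriv (x : ℝ) (hx : x ≠ 0) :
    HasDerivAt hEx (2 * x * Real.sin (1 / x) - Real.cos (1 / x)) x := by
  have h1 : HasDerivAt (fun y : ℝ => y⁻¹) (-(x ^ 2)⁻¹) x := hasDerivAt_inv hx
  have h2 : HasDerivAt Real.sin (Real.cos x⁻¹) x⁻¹ := Real.hasDerivAt_sin _
  have h3 : HasDerivAt (fun y : ℝ => Real.sin y⁻¹) (Real.cos x⁻¹ * -(x ^ 2)⁻¹) x :=
    h2.comp x h1
  have h4 : HasDerivAt (fun y : ℝ => y ^ 2) (2 * x) x := by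
    simpa using hasDerivAt_pow 2 x
  have h5 := h4.mul h3
  have heq : hEx =ᶠ[nhds x] fun y : ℝ => y ^ 2 * Real.sin y⁻¹ := by
    filter_upwards [isOpen_ne.mem_nhds hx] with u hu
    simp [hEx, hu, one_div]
  have h6 := (h5.congr_of_eventuallyEq heq)
  have : 2 * x * Real.sin x⁻¹ + x ^ 2 * (Real.cos x⁻¹ * -(x ^ 2)⁻¹)
      = 2 * x * Real.sin (1 / x) - Real.cos (1 / x) := by
    rw [one_div]; field_simp; ring
  rwa [this] at h6

lemma fEx_hasDeriv (x₀ : ℝ) (hx : x₀ ≠ 0)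
    (hU : ∀ᶠ x in nhds x₀, 0 < x ∧ Real.sin (1 / x) < 0) :
    HasDerivAt fEx (1 - Real.cos (1 / x₀)) x₀ := by
  have hF : HasDerivAt (fun x => hEx x - gEx x + x)
      ((2 * x₀ * Real.sin (1 / x₀) - Real.cos (1 / x₀)) - 2 * x₀ * Real.sin (1 / x₀) + 1) x₀ :=
    ((hEx_hasDeriv x₀ hx).sub (gEx_hasDeriv x₀ hx)).add (hasDerivAt_id x₀)
  have heq : fEx =ᶠ[nhds x₀] fun x => hEx x - gEx x + x := by
    filter_upwards [hU] with u ⟨hu0, hus⟩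
    have hne : u ≠ 0 := ne_of_gt hu0
    have hh : hEx u ≤ 0 := by
      simp only [hEx, if_neg hne]
      nlinarith [sq_nonneg u]
    simp [fEx, min_eq_right hh, abs_of_pos hu0]
  have := hF.congr_of_eventuallyEq heq
  exact this.congr_deriv (by ring)


lemma hasDerivAt_to_left {f : ℝ → ℝ} {x d : ℝ} (h : HasDerivAt f d x) :
    HasLeftDeriv f x d := by
  have hs := hasDerivAt_iff_tendsto_slope.mp h
  have : (fun y : ℝ => (f y - f x) / (y - x)) = slope f x := by
    funext y; rw [slope_def_field]
  rw [HasLeftDeriv, this]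
  exact hs.mono_left (nhdsWithin_mono x fun y hy => ne_of_lt hy)

lemma hasDerivAt_to_right {f : ℝ → ℝ} {x d : ℝ} (h : HasDerivAt f d x) :
    HasRightDeriv f x d := by
  have hs := hasDerivAt_iff_tendsto_slope.mp h
  have : (fun y : ℝ => (f y - f x) / (y - x)) = slope f x := by
    funext y; rw [slope_def_field]
  rw [HasRightDeriv, this]
  exact hs.mono_left (nhdsWithin_mono x fun y hy => ne_of_gt hy)


/-- The conclusion of the convergence lemma fails for `f` at `x* = 0`: for every
`r > 0` there is `ε ∈ (0, r)` such that for every `δ > 0` there is a `δ`-stationary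
point `x₀` of `f` with `ε ≤ x₀ < r`. -/
theorem fEx_convergence_lemma_fails :
    ∀ r > 0, ∃ ε ∈ Set.Ioo (0 : ℝ) r, ∀ δ > 0,
      ∃ x₀ : ℝ, ε ≤ x₀ ∧ x₀ < r ∧ IsDeltaStationaryPt1 fEx δ x₀ := by
  intro r hr
  have hπ := Real.pi_pos
  obtain ⟨k, hk⟩ := exists_nat_gt ((1 / r + π) / (2 * π))
  set K : ℝ := 2 * π * k with hK
  have h2π : (0 : ℝ) < 2 * π := by linarith
  have hKπ : 1 / r < K - π := by
    rw [div_lt_iff₀ h2π] at hk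
    nlinarith
  have hr0 : 0 < 1 / r := by positivity
  have hKπ0 : 0 < K - π := lt_trans hr0 hKπ
  have hK0 : 0 < K := by linarith
  have hεb : 1 / K < 1 / (K - π) := one_div_lt_one_div_of_lt hKπ0 (by linarith)
  have hbr : 1 / (K - π) < r := by
    rw [div_lt_iff₀ hKπ0]
    have := (div_lt_iff₀ hr).mp hKπ
    nlinarith
  refine ⟨1 / K, ⟨by positivity, by linarith⟩, ?_⟩
  intro δ hδ
  set t : ℝ := min 1 (Real.sqrt δ) with ht
  have ht0 : 0 < t := lt_min one_pos (Real.sqrt_pos.mpr hδ)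
  have ht1 : t ≤ 1 := min_le_left _ _
  have htπ : t < π := lt_of_le_of_lt ht1 (by nlinarith [Real.pi_gt_three])
  set θ : ℝ := K - t with hθ
  have hθ1 : K - π < θ := by rw [hθ]; linarith
  have hθ2 : θ < K := by rw [hθ]; linarith
  have hθ0 : 0 < θ := lt_trans hKπ0 hθ1
  have hx0 : (0 : ℝ) < 1 / θ := by positivity
  have hmem : 1 / θ ∈ Set.Ioo (1 / K) (1 / (K - π)) :=
    ⟨one_div_lt_one_div_of_lt hθ0 hθ2, one_div_lt_one_div_of_lt hKπ0 hθ1⟩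
  refine ⟨1 / θ, le_of_lt hmem.1, lt_trans hmem.2 hbr, ?_⟩
  have hU : ∀ᶠ x in nhds (1 / θ), 0 < x ∧ Real.sin (1 / x) < 0 := by
    filter_upwards [isOpen_Ioo.mem_nhds hmem] with x hx
    obtain ⟨hx1, hx2⟩ := hx
    have hxpos : 0 < x := lt_trans (by positivity) hx1
    refine ⟨hxpos, ?_⟩
    have h1 : 1 / x < K := by
      rw [div_lt_iff₀ hxpos]
      nlinarith [(div_lt_iff₀ hK0).mp hx1]
    have h2 : K - π < 1 / x := by
      rw [lt_div_iff₀ hxpos]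
      nlinarith [(lt_div_iff₀ hKπ0).mp hx2]
    have hper : Real.sin (1 / x - K + (k : ℤ) * (2 * π)) = Real.sin (1 / x - K) :=
      Real.sin_add_int_mul_two_pi _ k
    have harg : 1 / x - K + (k : ℤ) * (2 * π) = 1 / x := by
      rw [hK]; push_cast; ring
    rw [harg] at hper
    rw [hper]
    exact Real.sin_neg_of_neg_of_neg_pi_lt (by linarith) (by linarith)
  have hd := fEx_hasDeriv (1 / θ) (ne_of_gt hx0) hU
  have hcosθ : Real.cos (1 / (1 / θ)) = Real.cos t := by
    rw [one_div_one_div]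
    calc Real.cos θ = Real.cos (-(t - K)) := by rw [hθ]; ring_nf
      _ = Real.cos (t - K) := Real.cos_neg _
      _ = Real.cos (t - K + (k : ℤ) * (2 * π)) := (Real.cos_add_int_mul_two_pi _ k).symm
      _ = Real.cos t := by congr 1; rw [hK]; push_cast; ring
  rw [hcosθ] at hd
  have hd0 : 0 ≤ 1 - Real.cos t := by linarith [Real.cos_le_one t]
  have hdδ : 1 - Real.cos t ≤ δ := by
    have hb := Real.one_sub_sq_div_two_le_cos (x := t)
    have htsq : t ^ 2 ≤ δ := by
      have h1 : t ≤ Real.sqrt δ := min_le_right _ _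
      nlinarith [Real.sq_sqrt hδ.le, Real.sqrt_nonneg δ]
    nlinarith
  exact ⟨1 - Real.cos t, 1 - Real.cos t, hasDerivAt_to_left hd, hasDerivAt_to_right hd,
    by linarith, by linarith⟩
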